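/- For every four-qubit array v : Fin 2 → Fin 2 → Fin 2 → Fin 2 → ℝ and all invertible 2×2 real matrices g₁, g₂, g₃, g₄, the intersection invariant is unchanged under the action: ñ₁₉(g·v) = ñ₁₉(v). -/
import Mathlib


/-- Solution space of the four simultaneous contraction conditions defining
the intersection invariant `ñ₁₉` of four qubits. -/
def S₁₉ (v : Fin 2 → Fin 2 → Fin 2 → Fin 2 → ℝ) :
    Submodule ℝ (Fin 2 → Fin 2 → Fin 2 → Fin 2 → ℝ) where
  carrier := { w |
    (∀ j₁ k₁, ∑ j₂, ∑ j₃, ∑ j₄, v j₁ j₂ j₃ j₄ * w k₁ j₂ j₃ j₄ = 0) ∧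
    (∀ j₂ k₂, ∑ j₁, ∑ j₃, ∑ j₄, v j₁ j₂ j₃ j₄ * w j₁ k₂ j₃ j₄ = 0) ∧
    (∀ j₃ k₃, ∑ j₁, ∑ j₂, ∑ j₄, v j₁ j₂ j₃ j₄ * w j₁ j₂ k₃ j₄ = 0) ∧
    (∀ j₄ k₄, ∑ j₁, ∑ j₂, ∑ j₃, v j₁ j₂ j₃ j₄ * w j₁ j₂ j₃ k₄ = 0) }
  zero_mem' := by
    refine ⟨?_, ?_, ?_, ?_⟩ <;> intro a b <;> simp
  add_mem' := by
    rintro a b ⟨ha1, ha2, ha3, ha4⟩ ⟨hb1, hb2, hb3, hb4⟩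
    refine ⟨fun p q => ?_, fun p q => ?_, fun p q => ?_, fun p q => ?_⟩ <;>
      simp only [Pi.add_apply, mul_add, Finset.sum_add_distrib]
    · rw [ha1 p q, hb1 p q, add_zero]
    · rw [ha2 p q, hb2 p q, add_zero]
    · rw [ha3 p q, hb3 p q, add_zero]
    · rw [ha4 p q, hb4 p q, add_zero]
  smul_mem' := by
    rintro c a ⟨ha1, ha2, ha3, ha4⟩
    have hc : ∀ x y : ℝ, x * (c * y) = c * (x * y) := fun x y => mul_left_comm x c y
    refine ⟨fun p q => ?_, fun p q => ?_, fun p q => ?_, fun p q => ?_⟩ <;>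
      simp only [Pi.smul_apply, smul_eq_mul, hc, ← Finset.mul_sum]
    · rw [ha1 p q, mul_zero]
    · rw [ha2 p q, mul_zero]
    · rw [ha3 p q, mul_zero]
    · rw [ha4 p q, mul_zero]

/-- `ñ₁₉(v)`: the dimension of `S₁₉ v`. -/
noncomputable def n₁₉ (v : Fin 2 → Fin 2 → Fin 2 → Fin 2 → ℝ) : ℕ :=
  Module.finrank ℝ (S₁₉ v)

/-- Action of a quadruple of matrices on a four-qubit coordinate array:
`(g·v) j₁ j₂ j₃ j₄ = ∑ k₁ k₂ k₃ k₄,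
  v k₁ k₂ k₃ k₄ * g₁ k₁ j₁ * g₂ k₂ j₂ * g₃ k₃ j₃ * g₄ k₄ j₄`. -/
def act₄ (g₁ g₂ g₃ g₄ : Matrix (Fin 2) (Fin 2) ℝ)
    (v : Fin 2 → Fin 2 → Fin 2 → Fin 2 → ℝ) :
    Fin 2 → Fin 2 → Fin 2 → Fin 2 → ℝ :=
  fun j₁ j₂ j₃ j₄ => ∑ k₁, ∑ k₂, ∑ k₃, ∑ k₄,
    v k₁ k₂ k₃ k₄ * g₁ k₁ j₁ * g₂ k₂ j₂ * g₃ k₃ j₃ * g₄ k₄ j₄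


/-! ### Auxiliary machinery for the invariance proof -/

open Matrix

private abbrev T4 := Fin 2 → Fin 2 → Fin 2 → Fin 2 → ℝ

private lemma matrix_entries {p q : Matrix (Fin 2) (Fin 2) ℝ} (h : p * qᵀ = 1) :
    (p 0 0 * q 0 0 + p 0 1 * q 0 1 = 1) ∧ (p 0 0 * q 1 0 + p 0 1 * q 1 1 = 0) ∧
    (p 1 0 * q 0 0 + p 1 1 * q 0 1 = 0) ∧ (p 1 0 * q 1 0 + p 1 1 * q 1 1 = 1) := by
  have h' : ∀ a b, (p * qᵀ) a b = (1 : Matrix (Fin 2) (Fin 2) ℝ) a b := fun a b => by rw [h]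
  refine ⟨?_, ?_, ?_, ?_⟩
  · simpa [Matrix.mul_apply, Matrix.one_apply, Fin.sum_univ_two] using h' 0 0
  · simpa [Matrix.mul_apply, Matrix.one_apply, Fin.sum_univ_two] using h' 0 1
  · simpa [Matrix.mul_apply, Matrix.one_apply, Fin.sum_univ_two] using h' 1 0
  · simpa [Matrix.mul_apply, Matrix.one_apply, Fin.sum_univ_two] using h' 1 1

private def A1 (p : Matrix (Fin 2) (Fin 2) ℝ) (v : T4) : T4 :=
  fun j1 j2 j3 j4 => ∑ a, v a j2 j3 j4 * p a j1

private def A2 (p : Matrix (Fin 2) (Fin 2) ℝ) (v : T4) : T4 :=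
  fun j1 j2 j3 j4 => ∑ a, v j1 a j3 j4 * p a j2

private def A3 (p : Matrix (Fin 2) (Fin 2) ℝ) (v : T4) : T4 :=
  fun j1 j2 j3 j4 => ∑ a, v j1 j2 a j4 * p a j3

private def A4 (p : Matrix (Fin 2) (Fin 2) ℝ) (v : T4) : T4 :=
  fun j1 j2 j3 j4 => ∑ a, v j1 j2 j3 a * p a j4


private lemma S19_A1 {p q : Matrix (Fin 2) (Fin 2) ℝ} (h : p * qᵀ = 1)
    {v u : T4} (hu : u ∈ S₁₉ v) : A1 q u ∈ S₁₉ (A1 p v) := by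
  obtain ⟨e00, e01, e10, e11⟩ := matrix_entries h
  obtain ⟨h1, h2, h3, h4⟩ := hu
  have h1' : ∀ a b : Fin 2, v a 0 0 0 * u b 0 0 0 + v a 0 0 1 * u b 0 0 1 + v a 0 1 0 * u b 0 1 0 + v a 0 1 1 * u b 0 1 1 + v a 1 0 0 * u b 1 0 0 + v a 1 0 1 * u b 1 0 1 + v a 1 1 0 * u b 1 1 0 + v a 1 1 1 * u b 1 1 1 = 0 := by
    intro a b; have := h1 a b; simp only [Fin.sum_univ_two] at this; linarith
  have h2' : ∀ a b : Fin 2, v 0 a 0 0 * u 0 b 0 0 + v 0 a 0 1 * u 0 b 0 1 + v 0 a 1 0 * u 0 b 1 0 + v 0 a 1 1 * u 0 b 1 1 + v 1 a 0 0 * u 1 b 0 0 + v 1 a 0 1 * u 1 b 0 1 + v 1 a 1 0 * u 1 b 1 0 + v 1 a 1 1 * u 1 b 1 1 = 0 := by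
    intro a b; have := h2 a b; simp only [Fin.sum_univ_two] at this; linarith
  have h3' : ∀ a b : Fin 2, v 0 0 a 0 * u 0 0 b 0 + v 0 0 a 1 * u 0 0 b 1 + v 0 1 a 0 * u 0 1 b 0 + v 0 1 a 1 * u 0 1 b 1 + v 1 0 a 0 * u 1 0 b 0 + v 1 0 a 1 * u 1 0 b 1 + v 1 1 a 0 * u 1 1 b 0 + v 1 1 a 1 * u 1 1 b 1 = 0 := by
    intro a b; have := h3 a b; simp only [Fin.sum_univ_two] at this; linarith
  have h4' : ∀ a b : Fin 2, v 0 0 0 a * u 0 0 0 b + v 0 0 1 a * u 0 0 1 b + v 0 1 0 a * u 0 1 0 b + v 0 1 1 a * u 0 1 1 b + v 1 0 0 a * u 1 0 0 b + v 1 0 1 a * u 1 0 1 b + v 1 1 0 a * u 1 1 0 b + v 1 1 1 a * u 1 1 1 b = 0 := by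
    intro a b; have := h4 a b; simp only [Fin.sum_univ_two] at this; linarith
  refine ⟨fun j k => ?_, fun j k => ?_, fun j k => ?_, fun j k => ?_⟩ <;>
    simp only [A1, Fin.sum_univ_two]
  · linear_combination p 0 j * q 0 k * h1' 0 0 + p 0 j * q 1 k * h1' 0 1 + p 1 j * q 0 k * h1' 1 0 + p 1 j * q 1 k * h1' 1 1
  · linear_combination h2' j k +
      (v 0 j 0 0 * u 0 k 0 0 + v 0 j 0 1 * u 0 k 0 1 + v 0 j 1 0 * u 0 k 1 0 + v 0 j 1 1 * u 0 k 1 1) * e00 +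
      (v 0 j 0 0 * u 1 k 0 0 + v 0 j 0 1 * u 1 k 0 1 + v 0 j 1 0 * u 1 k 1 0 + v 0 j 1 1 * u 1 k 1 1) * e01 +
      (v 1 j 0 0 * u 0 k 0 0 + v 1 j 0 1 * u 0 k 0 1 + v 1 j 1 0 * u 0 k 1 0 + v 1 j 1 1 * u 0 k 1 1) * e10 +
      (v 1 j 0 0 * u 1 k 0 0 + v 1 j 0 1 * u 1 k 0 1 + v 1 j 1 0 * u 1 k 1 0 + v 1 j 1 1 * u 1 k 1 1) * e11
  · linear_combination h3' j k +
      (v 0 0 j 0 * u 0 0 k 0 + v 0 0 j 1 * u 0 0 k 1 + v 0 1 j 0 * u 0 1 k 0 + v 0 1 j 1 * u 0 1 k 1) * e00 +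
      (v 0 0 j 0 * u 1 0 k 0 + v 0 0 j 1 * u 1 0 k 1 + v 0 1 j 0 * u 1 1 k 0 + v 0 1 j 1 * u 1 1 k 1) * e01 +
      (v 1 0 j 0 * u 0 0 k 0 + v 1 0 j 1 * u 0 0 k 1 + v 1 1 j 0 * u 0 1 k 0 + v 1 1 j 1 * u 0 1 k 1) * e10 +
      (v 1 0 j 0 * u 1 0 k 0 + v 1 0 j 1 * u 1 0 k 1 + v 1 1 j 0 * u 1 1 k 0 + v 1 1 j 1 * u 1 1 k 1) * e11
  · linear_combination h4' j k +
      (v 0 0 0 j * u 0 0 0 k + v 0 0 1 j * u 0 0 1 k + v 0 1 0 j * u 0 1 0 k + v 0 1 1 j * u 0 1 1 k) * e00 +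
      (v 0 0 0 j * u 1 0 0 k + v 0 0 1 j * u 1 0 1 k + v 0 1 0 j * u 1 1 0 k + v 0 1 1 j * u 1 1 1 k) * e01 +
      (v 1 0 0 j * u 0 0 0 k + v 1 0 1 j * u 0 0 1 k + v 1 1 0 j * u 0 1 0 k + v 1 1 1 j * u 0 1 1 k) * e10 +
      (v 1 0 0 j * u 1 0 0 k + v 1 0 1 j * u 1 0 1 k + v 1 1 0 j * u 1 1 0 k + v 1 1 1 j * u 1 1 1 k) * e11

private lemma S19_A2 {p q : Matrix (Fin 2) (Fin 2) ℝ} (h : p * qᵀ = 1)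
    {v u : T4} (hu : u ∈ S₁₉ v) : A2 q u ∈ S₁₉ (A2 p v) := by
  obtain ⟨e00, e01, e10, e11⟩ := matrix_entries h
  obtain ⟨h1, h2, h3, h4⟩ := hu
  have h1' : ∀ a b : Fin 2, v a 0 0 0 * u b 0 0 0 + v a 0 0 1 * u b 0 0 1 + v a 0 1 0 * u b 0 1 0 + v a 0 1 1 * u b 0 1 1 + v a 1 0 0 * u b 1 0 0 + v a 1 0 1 * u b 1 0 1 + v a 1 1 0 * u b 1 1 0 + v a 1 1 1 * u b 1 1 1 = 0 := by
    intro a b; have := h1 a b; simp only [Fin.sum_univ_two] at this; linarith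
  have h2' : ∀ a b : Fin 2, v 0 a 0 0 * u 0 b 0 0 + v 0 a 0 1 * u 0 b 0 1 + v 0 a 1 0 * u 0 b 1 0 + v 0 a 1 1 * u 0 b 1 1 + v 1 a 0 0 * u 1 b 0 0 + v 1 a 0 1 * u 1 b 0 1 + v 1 a 1 0 * u 1 b 1 0 + v 1 a 1 1 * u 1 b 1 1 = 0 := by
    intro a b; have := h2 a b; simp only [Fin.sum_univ_two] at this; linarith
  have h3' : ∀ a b : Fin 2, v 0 0 a 0 * u 0 0 b 0 + v 0 0 a 1 * u 0 0 b 1 + v 0 1 a 0 * u 0 1 b 0 + v 0 1 a 1 * u 0 1 b 1 + v 1 0 a 0 * u 1 0 b 0 + v 1 0 a 1 * u 1 0 b 1 + v 1 1 a 0 * u 1 1 b 0 + v 1 1 a 1 * u 1 1 b 1 = 0 := by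
    intro a b; have := h3 a b; simp only [Fin.sum_univ_two] at this; linarith
  have h4' : ∀ a b : Fin 2, v 0 0 0 a * u 0 0 0 b + v 0 0 1 a * u 0 0 1 b + v 0 1 0 a * u 0 1 0 b + v 0 1 1 a * u 0 1 1 b + v 1 0 0 a * u 1 0 0 b + v 1 0 1 a * u 1 0 1 b + v 1 1 0 a * u 1 1 0 b + v 1 1 1 a * u 1 1 1 b = 0 := by
    intro a b; have := h4 a b; simp only [Fin.sum_univ_two] at this; linarith
  refine ⟨fun j k => ?_, fun j k => ?_, fun j k => ?_, fun j k => ?_⟩ <;>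
    simp only [A2, Fin.sum_univ_two]
  · linear_combination h1' j k +
      (v j 0 0 0 * u k 0 0 0 + v j 0 0 1 * u k 0 0 1 + v j 0 1 0 * u k 0 1 0 + v j 0 1 1 * u k 0 1 1) * e00 +
      (v j 0 0 0 * u k 1 0 0 + v j 0 0 1 * u k 1 0 1 + v j 0 1 0 * u k 1 1 0 + v j 0 1 1 * u k 1 1 1) * e01 +
      (v j 1 0 0 * u k 0 0 0 + v j 1 0 1 * u k 0 0 1 + v j 1 1 0 * u k 0 1 0 + v j 1 1 1 * u k 0 1 1) * e10 +
      (v j 1 0 0 * u k 1 0 0 + v j 1 0 1 * u k 1 0 1 + v j 1 1 0 * u k 1 1 0 + v j 1 1 1 * u k 1 1 1) * e11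
  · linear_combination p 0 j * q 0 k * h2' 0 0 + p 0 j * q 1 k * h2' 0 1 + p 1 j * q 0 k * h2' 1 0 + p 1 j * q 1 k * h2' 1 1
  · linear_combination h3' j k +
      (v 0 0 j 0 * u 0 0 k 0 + v 0 0 j 1 * u 0 0 k 1 + v 1 0 j 0 * u 1 0 k 0 + v 1 0 j 1 * u 1 0 k 1) * e00 +
      (v 0 0 j 0 * u 0 1 k 0 + v 0 0 j 1 * u 0 1 k 1 + v 1 0 j 0 * u 1 1 k 0 + v 1 0 j 1 * u 1 1 k 1) * e01 +
      (v 0 1 j 0 * u 0 0 k 0 + v 0 1 j 1 * u 0 0 k 1 + v 1 1 j 0 * u 1 0 k 0 + v 1 1 j 1 * u 1 0 k 1) * e10 +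
      (v 0 1 j 0 * u 0 1 k 0 + v 0 1 j 1 * u 0 1 k 1 + v 1 1 j 0 * u 1 1 k 0 + v 1 1 j 1 * u 1 1 k 1) * e11
  · linear_combination h4' j k +
      (v 0 0 0 j * u 0 0 0 k + v 0 0 1 j * u 0 0 1 k + v 1 0 0 j * u 1 0 0 k + v 1 0 1 j * u 1 0 1 k) * e00 +
      (v 0 0 0 j * u 0 1 0 k + v 0 0 1 j * u 0 1 1 k + v 1 0 0 j * u 1 1 0 k + v 1 0 1 j * u 1 1 1 k) * e01 +
      (v 0 1 0 j * u 0 0 0 k + v 0 1 1 j * u 0 0 1 k + v 1 1 0 j * u 1 0 0 k + v 1 1 1 j * u 1 0 1 k) * e10 +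
      (v 0 1 0 j * u 0 1 0 k + v 0 1 1 j * u 0 1 1 k + v 1 1 0 j * u 1 1 0 k + v 1 1 1 j * u 1 1 1 k) * e11

private lemma S19_A3 {p q : Matrix (Fin 2) (Fin 2) ℝ} (h : p * qᵀ = 1)
    {v u : T4} (hu : u ∈ S₁₉ v) : A3 q u ∈ S₁₉ (A3 p v) := by
  obtain ⟨e00, e01, e10, e11⟩ := matrix_entries h
  obtain ⟨h1, h2, h3, h4⟩ := hu
  have h1' : ∀ a b : Fin 2, v a 0 0 0 * u b 0 0 0 + v a 0 0 1 * u b 0 0 1 + v a 0 1 0 * u b 0 1 0 + v a 0 1 1 * u b 0 1 1 + v a 1 0 0 * u b 1 0 0 + v a 1 0 1 * u b 1 0 1 + v a 1 1 0 * u b 1 1 0 + v a 1 1 1 * u b 1 1 1 = 0 := by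
    intro a b; have := h1 a b; simp only [Fin.sum_univ_two] at this; linarith
  have h2' : ∀ a b : Fin 2, v 0 a 0 0 * u 0 b 0 0 + v 0 a 0 1 * u 0 b 0 1 + v 0 a 1 0 * u 0 b 1 0 + v 0 a 1 1 * u 0 b 1 1 + v 1 a 0 0 * u 1 b 0 0 + v 1 a 0 1 * u 1 b 0 1 + v 1 a 1 0 * u 1 b 1 0 + v 1 a 1 1 * u 1 b 1 1 = 0 := by
    intro a b; have := h2 a b; simp only [Fin.sum_univ_two] at this; linarith
  have h3' : ∀ a b : Fin 2, v 0 0 a 0 * u 0 0 b 0 + v 0 0 a 1 * u 0 0 b 1 + v 0 1 a 0 * u 0 1 b 0 + v 0 1 a 1 * u 0 1 b 1 + v 1 0 a 0 * u 1 0 b 0 + v 1 0 a 1 * u 1 0 b 1 + v 1 1 a 0 * u 1 1 b 0 + v 1 1 a 1 * u 1 1 b 1 = 0 := by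
    intro a b; have := h3 a b; simp only [Fin.sum_univ_two] at this; linarith
  have h4' : ∀ a b : Fin 2, v 0 0 0 a * u 0 0 0 b + v 0 0 1 a * u 0 0 1 b + v 0 1 0 a * u 0 1 0 b + v 0 1 1 a * u 0 1 1 b + v 1 0 0 a * u 1 0 0 b + v 1 0 1 a * u 1 0 1 b + v 1 1 0 a * u 1 1 0 b + v 1 1 1 a * u 1 1 1 b = 0 := by
    intro a b; have := h4 a b; simp only [Fin.sum_univ_two] at this; linarith
  refine ⟨fun j k => ?_, fun j k => ?_, fun j k => ?_, fun j k => ?_⟩ <;>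
    simp only [A3, Fin.sum_univ_two]
  · linear_combination h1' j k +
      (v j 0 0 0 * u k 0 0 0 + v j 0 0 1 * u k 0 0 1 + v j 1 0 0 * u k 1 0 0 + v j 1 0 1 * u k 1 0 1) * e00 +
      (v j 0 0 0 * u k 0 1 0 + v j 0 0 1 * u k 0 1 1 + v j 1 0 0 * u k 1 1 0 + v j 1 0 1 * u k 1 1 1) * e01 +
      (v j 0 1 0 * u k 0 0 0 + v j 0 1 1 * u k 0 0 1 + v j 1 1 0 * u k 1 0 0 + v j 1 1 1 * u k 1 0 1) * e10 +
      (v j 0 1 0 * u k 0 1 0 + v j 0 1 1 * u k 0 1 1 + v j 1 1 0 * u k 1 1 0 + v j 1 1 1 * u k 1 1 1) * e11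
  · linear_combination h2' j k +
      (v 0 j 0 0 * u 0 k 0 0 + v 0 j 0 1 * u 0 k 0 1 + v 1 j 0 0 * u 1 k 0 0 + v 1 j 0 1 * u 1 k 0 1) * e00 +
      (v 0 j 0 0 * u 0 k 1 0 + v 0 j 0 1 * u 0 k 1 1 + v 1 j 0 0 * u 1 k 1 0 + v 1 j 0 1 * u 1 k 1 1) * e01 +
      (v 0 j 1 0 * u 0 k 0 0 + v 0 j 1 1 * u 0 k 0 1 + v 1 j 1 0 * u 1 k 0 0 + v 1 j 1 1 * u 1 k 0 1) * e10 +
      (v 0 j 1 0 * u 0 k 1 0 + v 0 j 1 1 * u 0 k 1 1 + v 1 j 1 0 * u 1 k 1 0 + v 1 j 1 1 * u 1 k 1 1) * e11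
  · linear_combination p 0 j * q 0 k * h3' 0 0 + p 0 j * q 1 k * h3' 0 1 + p 1 j * q 0 k * h3' 1 0 + p 1 j * q 1 k * h3' 1 1
  · linear_combination h4' j k +
      (v 0 0 0 j * u 0 0 0 k + v 0 1 0 j * u 0 1 0 k + v 1 0 0 j * u 1 0 0 k + v 1 1 0 j * u 1 1 0 k) * e00 +
      (v 0 0 0 j * u 0 0 1 k + v 0 1 0 j * u 0 1 1 k + v 1 0 0 j * u 1 0 1 k + v 1 1 0 j * u 1 1 1 k) * e01 +
      (v 0 0 1 j * u 0 0 0 k + v 0 1 1 j * u 0 1 0 k + v 1 0 1 j * u 1 0 0 k + v 1 1 1 j * u 1 1 0 k) * e10 +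
      (v 0 0 1 j * u 0 0 1 k + v 0 1 1 j * u 0 1 1 k + v 1 0 1 j * u 1 0 1 k + v 1 1 1 j * u 1 1 1 k) * e11

private lemma S19_A4 {p q : Matrix (Fin 2) (Fin 2) ℝ} (h : p * qᵀ = 1)
    {v u : T4} (hu : u ∈ S₁₉ v) : A4 q u ∈ S₁₉ (A4 p v) := by
  obtain ⟨e00, e01, e10, e11⟩ := matrix_entries h
  obtain ⟨h1, h2, h3, h4⟩ := hu
  have h1' : ∀ a b : Fin 2, v a 0 0 0 * u b 0 0 0 + v a 0 0 1 * u b 0 0 1 + v a 0 1 0 * u b 0 1 0 + v a 0 1 1 * u b 0 1 1 + v a 1 0 0 * u b 1 0 0 + v a 1 0 1 * u b 1 0 1 + v a 1 1 0 * u b 1 1 0 + v a 1 1 1 * u b 1 1 1 = 0 := by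
    intro a b; have := h1 a b; simp only [Fin.sum_univ_two] at this; linarith
  have h2' : ∀ a b : Fin 2, v 0 a 0 0 * u 0 b 0 0 + v 0 a 0 1 * u 0 b 0 1 + v 0 a 1 0 * u 0 b 1 0 + v 0 a 1 1 * u 0 b 1 1 + v 1 a 0 0 * u 1 b 0 0 + v 1 a 0 1 * u 1 b 0 1 + v 1 a 1 0 * u 1 b 1 0 + v 1 a 1 1 * u 1 b 1 1 = 0 := by
    intro a b; have := h2 a b; simp only [Fin.sum_univ_two] at this; linarith
  have h3' : ∀ a b : Fin 2, v 0 0 a 0 * u 0 0 b 0 + v 0 0 a 1 * u 0 0 b 1 + v 0 1 a 0 * u 0 1 b 0 + v 0 1 a 1 * u 0 1 b 1 + v 1 0 a 0 * u 1 0 b 0 + v 1 0 a 1 * u 1 0 b 1 + v 1 1 a 0 * u 1 1 b 0 + v 1 1 a 1 * u 1 1 b 1 = 0 := by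
    intro a b; have := h3 a b; simp only [Fin.sum_univ_two] at this; linarith
  have h4' : ∀ a b : Fin 2, v 0 0 0 a * u 0 0 0 b + v 0 0 1 a * u 0 0 1 b + v 0 1 0 a * u 0 1 0 b + v 0 1 1 a * u 0 1 1 b + v 1 0 0 a * u 1 0 0 b + v 1 0 1 a * u 1 0 1 b + v 1 1 0 a * u 1 1 0 b + v 1 1 1 a * u 1 1 1 b = 0 := by
    intro a b; have := h4 a b; simp only [Fin.sum_univ_two] at this; linarith
  refine ⟨fun j k => ?_, fun j k => ?_, fun j k => ?_, fun j k => ?_⟩ <;>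
    simp only [A4, Fin.sum_univ_two]
  · linear_combination h1' j k +
      (v j 0 0 0 * u k 0 0 0 + v j 0 1 0 * u k 0 1 0 + v j 1 0 0 * u k 1 0 0 + v j 1 1 0 * u k 1 1 0) * e00 +
      (v j 0 0 0 * u k 0 0 1 + v j 0 1 0 * u k 0 1 1 + v j 1 0 0 * u k 1 0 1 + v j 1 1 0 * u k 1 1 1) * e01 +
      (v j 0 0 1 * u k 0 0 0 + v j 0 1 1 * u k 0 1 0 + v j 1 0 1 * u k 1 0 0 + v j 1 1 1 * u k 1 1 0) * e10 +
      (v j 0 0 1 * u k 0 0 1 + v j 0 1 1 * u k 0 1 1 + v j 1 0 1 * u k 1 0 1 + v j 1 1 1 * u k 1 1 1) * e11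
  · linear_combination h2' j k +
      (v 0 j 0 0 * u 0 k 0 0 + v 0 j 1 0 * u 0 k 1 0 + v 1 j 0 0 * u 1 k 0 0 + v 1 j 1 0 * u 1 k 1 0) * e00 +
      (v 0 j 0 0 * u 0 k 0 1 + v 0 j 1 0 * u 0 k 1 1 + v 1 j 0 0 * u 1 k 0 1 + v 1 j 1 0 * u 1 k 1 1) * e01 +
      (v 0 j 0 1 * u 0 k 0 0 + v 0 j 1 1 * u 0 k 1 0 + v 1 j 0 1 * u 1 k 0 0 + v 1 j 1 1 * u 1 k 1 0) * e10 +
      (v 0 j 0 1 * u 0 k 0 1 + v 0 j 1 1 * u 0 k 1 1 + v 1 j 0 1 * u 1 k 0 1 + v 1 j 1 1 * u 1 k 1 1) * e11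
  · linear_combination h3' j k +
      (v 0 0 j 0 * u 0 0 k 0 + v 0 1 j 0 * u 0 1 k 0 + v 1 0 j 0 * u 1 0 k 0 + v 1 1 j 0 * u 1 1 k 0) * e00 +
      (v 0 0 j 0 * u 0 0 k 1 + v 0 1 j 0 * u 0 1 k 1 + v 1 0 j 0 * u 1 0 k 1 + v 1 1 j 0 * u 1 1 k 1) * e01 +
      (v 0 0 j 1 * u 0 0 k 0 + v 0 1 j 1 * u 0 1 k 0 + v 1 0 j 1 * u 1 0 k 0 + v 1 1 j 1 * u 1 1 k 0) * e10 +
      (v 0 0 j 1 * u 0 0 k 1 + v 0 1 j 1 * u 0 1 k 1 + v 1 0 j 1 * u 1 0 k 1 + v 1 1 j 1 * u 1 1 k 1) * e11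
  · linear_combination p 0 j * q 0 k * h4' 0 0 + p 0 j * q 1 k * h4' 0 1 + p 1 j * q 0 k * h4' 1 0 + p 1 j * q 1 k * h4' 1 1


private lemma act₄_eq (p₁ p₂ p₃ p₄ : Matrix (Fin 2) (Fin 2) ℝ) (v : T4) :
    act₄ p₁ p₂ p₃ p₄ v = A1 p₁ (A2 p₂ (A3 p₃ (A4 p₄ v))) := by
  funext j₁ j₂ j₃ j₄
  simp only [act₄, A1, A2, A3, A4, Fin.sum_univ_two]
  ring

private lemma act₄_comp (a₁ a₂ a₃ a₄ b₁ b₂ b₃ b₄ : Matrix (Fin 2) (Fin 2) ℝ) (v : T4) :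
    act₄ a₁ a₂ a₃ a₄ (act₄ b₁ b₂ b₃ b₄ v)
      = act₄ (b₁ * a₁) (b₂ * a₂) (b₃ * a₃) (b₄ * a₄) v := by
  funext j₁ j₂ j₃ j₄
  simp only [act₄, Matrix.mul_apply, Fin.sum_univ_two]
  ring

private lemma act₄_one (v : T4) : act₄ 1 1 1 1 v = v := by
  funext j₁ j₂ j₃ j₄
  fin_cases j₁ <;> fin_cases j₂ <;> fin_cases j₃ <;> fin_cases j₄ <;>
    simp [act₄, Fin.sum_univ_two, Matrix.one_apply]

private def actL (m₁ m₂ m₃ m₄ : Matrix (Fin 2) (Fin 2) ℝ) : T4 →ₗ[ℝ] T4 where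
  toFun := act₄ m₁ m₂ m₃ m₄
  map_add' x y := by
    funext j₁ j₂ j₃ j₄
    simp only [act₄, Pi.add_apply, Fin.sum_univ_two]
    ring
  map_smul' c x := by
    funext j₁ j₂ j₃ j₄
    simp only [act₄, Pi.smul_apply, smul_eq_mul, RingHom.id_apply, Fin.sum_univ_two]
    ring

@[simp] private lemma actL_apply (m₁ m₂ m₃ m₄ : Matrix (Fin 2) (Fin 2) ℝ) (w : T4) :
    actL m₁ m₂ m₃ m₄ w = act₄ m₁ m₂ m₃ m₄ w := rfl

private lemma S19_act {p₁ p₂ p₃ p₄ q₁ q₂ q₃ q₄ : Matrix (Fin 2) (Fin 2) ℝ}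
    (h₁ : p₁ * q₁ᵀ = 1) (h₂ : p₂ * q₂ᵀ = 1) (h₃ : p₃ * q₃ᵀ = 1) (h₄ : p₄ * q₄ᵀ = 1)
    {v u : T4} (hu : u ∈ S₁₉ v) :
    act₄ q₁ q₂ q₃ q₄ u ∈ S₁₉ (act₄ p₁ p₂ p₃ p₄ v) := by
  rw [act₄_eq, act₄_eq]
  exact S19_A1 h₁ (S19_A2 h₂ (S19_A3 h₃ (S19_A4 h₄ hu)))

/-- **Invariance of the four-qubit intersection invariant `ñ₁₉`.**
For every four-qubit array `v` and invertible `2×2` real matrices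
`g₁, g₂, g₃, g₄`, one has `ñ₁₉(g·v) = ñ₁₉(v)`. -/
theorem four_qubit_n19_invariant
    (v : Fin 2 → Fin 2 → Fin 2 → Fin 2 → ℝ)
    (g₁ g₂ g₃ g₄ : Matrix.GeneralLinearGroup (Fin 2) ℝ) :
    n₁₉ (act₄ (g₁ : Matrix (Fin 2) (Fin 2) ℝ) (g₂ : Matrix (Fin 2) (Fin 2) ℝ)
      (g₃ : Matrix (Fin 2) (Fin 2) ℝ) (g₄ : Matrix (Fin 2) (Fin 2) ℝ) v)
      = n₁₉ v := by
  have mulinv : ∀ g : Matrix.GeneralLinearGroup (Fin 2) ℝ,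
      (g : Matrix (Fin 2) (Fin 2) ℝ) *
        (((g⁻¹ : Matrix.GeneralLinearGroup (Fin 2) ℝ) : Matrix (Fin 2) (Fin 2) ℝ)ᵀ)ᵀ = 1 := by
    intro g; rw [Matrix.transpose_transpose]; exact g.mul_inv
  have invmul : ∀ g : Matrix.GeneralLinearGroup (Fin 2) ℝ,
      ((g⁻¹ : Matrix.GeneralLinearGroup (Fin 2) ℝ) : Matrix (Fin 2) (Fin 2) ℝ) *
        (((g : Matrix (Fin 2) (Fin 2) ℝ))ᵀ)ᵀ = 1 := by
    intro g; rw [Matrix.transpose_transpose]; exact g.inv_mul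
  have tmul1 : ∀ g : Matrix.GeneralLinearGroup (Fin 2) ℝ,
      ((g : Matrix (Fin 2) (Fin 2) ℝ))ᵀ *
        ((g⁻¹ : Matrix.GeneralLinearGroup (Fin 2) ℝ) : Matrix (Fin 2) (Fin 2) ℝ)ᵀ = 1 := by
    intro g; rw [← Matrix.transpose_mul, g.inv_mul, Matrix.transpose_one]
  have tmul2 : ∀ g : Matrix.GeneralLinearGroup (Fin 2) ℝ,
      ((g⁻¹ : Matrix.GeneralLinearGroup (Fin 2) ℝ) : Matrix (Fin 2) (Fin 2) ℝ)ᵀ *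
        ((g : Matrix (Fin 2) (Fin 2) ℝ))ᵀ = 1 := by
    intro g; rw [← Matrix.transpose_mul, g.mul_inv, Matrix.transpose_one]
  let e : T4 ≃ₗ[ℝ] T4 := LinearEquiv.ofLinear
    (actL ((g₁⁻¹ : Matrix.GeneralLinearGroup (Fin 2) ℝ) : Matrix (Fin 2) (Fin 2) ℝ)ᵀ
      ((g₂⁻¹ : Matrix.GeneralLinearGroup (Fin 2) ℝ) : Matrix (Fin 2) (Fin 2) ℝ)ᵀ
      ((g₃⁻¹ : Matrix.GeneralLinearGroup (Fin 2) ℝ) : Matrix (Fin 2) (Fin 2) ℝ)ᵀ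
      ((g₄⁻¹ : Matrix.GeneralLinearGroup (Fin 2) ℝ) : Matrix (Fin 2) (Fin 2) ℝ)ᵀ)
    (actL ((g₁ : Matrix (Fin 2) (Fin 2) ℝ))ᵀ ((g₂ : Matrix (Fin 2) (Fin 2) ℝ))ᵀ
      ((g₃ : Matrix (Fin 2) (Fin 2) ℝ))ᵀ ((g₄ : Matrix (Fin 2) (Fin 2) ℝ))ᵀ)
    (LinearMap.ext fun w => by
      simp only [LinearMap.comp_apply, actL_apply, LinearMap.id_apply]
      rw [act₄_comp, tmul1 g₁, tmul1 g₂, tmul1 g₃, tmul1 g₄, act₄_one])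
    (LinearMap.ext fun w => by
      simp only [LinearMap.comp_apply, actL_apply, LinearMap.id_apply]
      rw [act₄_comp, tmul2 g₁, tmul2 g₂, tmul2 g₃, tmul2 g₄, act₄_one])
  have hmap : S₁₉ (act₄ (g₁ : Matrix (Fin 2) (Fin 2) ℝ) (g₂ : Matrix (Fin 2) (Fin 2) ℝ)
      (g₃ : Matrix (Fin 2) (Fin 2) ℝ) (g₄ : Matrix (Fin 2) (Fin 2) ℝ) v)
      = (S₁₉ v).map e.toLinearMap := by
    apply le_antisymm
    · intro w hw
      rw [Submodule.mem_map]
      refine ⟨act₄ ((g₁ : Matrix (Fin 2) (Fin 2) ℝ))ᵀ ((g₂ : Matrix (Fin 2) (Fin 2) ℝ))ᵀ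
        ((g₃ : Matrix (Fin 2) (Fin 2) ℝ))ᵀ ((g₄ : Matrix (Fin 2) (Fin 2) ℝ))ᵀ w, ?_, ?_⟩
      · have := S19_act (invmul g₁) (invmul g₂) (invmul g₃) (invmul g₄) hw
        rwa [act₄_comp, g₁.mul_inv, g₂.mul_inv, g₃.mul_inv, g₄.mul_inv, act₄_one] at this
      · show e _ = w
        simp only [e, LinearEquiv.ofLinear_apply, actL_apply]
        rw [act₄_comp, tmul1 g₁, tmul1 g₂, tmul1 g₃, tmul1 g₄, act₄_one]
    · rintro w hw
      rw [Submodule.mem_map] at hw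
      obtain ⟨u, hu, rfl⟩ := hw
      show act₄ _ _ _ _ u ∈ _
      exact S19_act (mulinv g₁) (mulinv g₂) (mulinv g₃) (mulinv g₄) hu
  unfold n₁₉
  rw [hmap]
  exact (LinearEquiv.finrank_eq
    (Submodule.equivMapOfInjective e.toLinearMap e.injective (S₁₉ v))).symm
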